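/- Let G = ⟨a, b | a^3 = b^3 = (ab)^3 = 1, (ab^{-1})^{s1}(a^{-1}b)^{s2} = 1⟩ be the rotational group of the toroidal hypermap (3,3,3)_{(s1,s2)} with s1 + s2 > 2. Then the cyclic subgroup ⟨a⟩ is core-free in G. -/
import Mathlib

namespace Stmt15Aux

/-- multiplication by ω on Eisenstein integers ℤ[ω] ≅ ℤ×ℤ -/
def rmap : (ℤ × ℤ) →ₗ[ℤ] (ℤ × ℤ) where
  toFun v := (-v.2, v.1 - v.2)
  map_add' := by intro a b; ext <;> simp <;> ring
  map_smul' := by intro m a; ext <;> simp <;> ring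

@[simp] lemma rmap_apply (v : ℤ × ℤ) : rmap v = (-v.2, v.1 - v.2) := rfl

lemma rmap_cube (v : ℤ × ℤ) : rmap (rmap (rmap v)) = v := by
  ext <;> simp <;> ring

variable (s1 s2 : ℕ)

def L : Submodule ℤ (ℤ × ℤ) :=
  Submodule.span ℤ {(((s1 : ℤ) + s2, (s2 : ℤ))), ((-(s2 : ℤ), (s1 : ℤ)))}

abbrev M := (ℤ × ℤ) ⧸ L s1 s2

lemma lam_mem : (((s1 : ℤ) + s2, (s2 : ℤ))) ∈ L s1 s2 :=
  Submodule.subset_span (by left; rfl)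

lemma mu_mem : ((-(s2 : ℤ), (s1 : ℤ))) ∈ L s1 s2 :=
  Submodule.subset_span (by right; rfl)

lemma L_le_comap : L s1 s2 ≤ (L s1 s2).comap rmap := by
  rw [L, Submodule.span_le]
  rintro v (rfl | rfl) <;> refine SetLike.mem_coe.mpr (Submodule.mem_comap.mpr ?_)
  · have : rmap (((s1:ℤ) + s2, (s2:ℤ))) = ((-(s2:ℤ), (s1:ℤ))) := by ext <;> simp
    rw [this]; exact mu_mem s1 s2
  · have : rmap ((-(s2:ℤ), (s1:ℤ))) = (-1 : ℤ) • (((s1:ℤ) + s2, (s2:ℤ))) +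
        (-1 : ℤ) • ((-(s2:ℤ), (s1:ℤ))) := by ext <;> simp <;> ring
    rw [this]
    exact Submodule.add_mem _ (Submodule.smul_mem _ _ (lam_mem s1 s2))
      (Submodule.smul_mem _ _ (mu_mem s1 s2))

def ρ : M s1 s2 →ₗ[ℤ] M s1 s2 := Submodule.mapQ _ _ rmap (L_le_comap s1 s2)

@[simp] lemma ρ_mk (v : ℤ × ℤ) :
    ρ s1 s2 (Submodule.Quotient.mk v) = Submodule.Quotient.mk (rmap v) := rfl

lemma ρ_cube (x : M s1 s2) : ρ s1 s2 (ρ s1 s2 (ρ s1 s2 x)) = x := by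
  obtain ⟨v, rfl⟩ := Submodule.Quotient.mk_surjective _ x
  rw [ρ_mk, ρ_mk, ρ_mk, rmap_cube]

def c : M s1 s2 := Submodule.Quotient.mk ((1 : ℤ), (0 : ℤ))

/-- A : rotation about origin -/
noncomputable def A : Equiv.Perm (M s1 s2) where
  toFun := ρ s1 s2
  invFun x := ρ s1 s2 (ρ s1 s2 x)
  left_inv x := ρ_cube s1 s2 x
  right_inv x := ρ_cube s1 s2 x

/-- B : rotation about another center -/
noncomputable def B : Equiv.Perm (M s1 s2) where
  toFun x := ρ s1 s2 x + c s1 s2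
  invFun x := ρ s1 s2 (ρ s1 s2 (x - c s1 s2))
  left_inv x := by
    simp only [add_sub_cancel_right]
    exact ρ_cube s1 s2 x
  right_inv x := by
    simp only [map_sub]
    rw [ρ_cube]; abel

@[simp] lemma A_apply (x : M s1 s2) : A s1 s2 x = ρ s1 s2 x := rfl
@[simp] lemma A_inv_apply (x : M s1 s2) : (A s1 s2)⁻¹ x = ρ s1 s2 (ρ s1 s2 x) := rfl
@[simp] lemma B_apply (x : M s1 s2) : B s1 s2 x = ρ s1 s2 x + c s1 s2 := rfl
@[simp] lemma B_inv_apply (x : M s1 s2) :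
    (B s1 s2)⁻¹ x = ρ s1 s2 (ρ s1 s2 (x - c s1 s2)) := rfl

lemma mk_eq_c : (Submodule.Quotient.mk ((1:ℤ), (0:ℤ)) : M s1 s2) = c s1 s2 := rfl

lemma hA3 : A s1 s2 ^ 3 = 1 := by
  ext x
  simp only [pow_succ, pow_zero, one_mul, Equiv.Perm.mul_apply, A_apply, Equiv.Perm.one_apply]
  exact ρ_cube s1 s2 x

lemma hB3 : B s1 s2 ^ 3 = 1 := by
  ext x
  obtain ⟨v, rfl⟩ := Submodule.Quotient.mk_surjective _ x
  simp only [pow_succ, pow_zero, one_mul, Equiv.Perm.mul_apply, B_apply, Equiv.Perm.one_apply,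
    ← mk_eq_c, ← Submodule.Quotient.mk_add, ρ_mk]
  congr 1
  ext <;> simp <;> ring

lemma hAB3 : (A s1 s2 * B s1 s2) ^ 3 = 1 := by
  ext x
  obtain ⟨v, rfl⟩ := Submodule.Quotient.mk_surjective _ x
  simp only [pow_succ, pow_zero, one_mul, Equiv.Perm.mul_apply, A_apply, B_apply,
    Equiv.Perm.one_apply, ← mk_eq_c, ← Submodule.Quotient.mk_add, ρ_mk]
  congr 1
  ext <;> simp <;> ring

lemma AB_inv : A s1 s2 * (B s1 s2)⁻¹ = Equiv.addRight (-(c s1 s2)) := by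
  ext x
  simp only [Equiv.Perm.mul_apply, B_inv_apply, A_apply, Equiv.coe_addRight]
  rw [ρ_cube]
  abel

lemma A_invB : (A s1 s2)⁻¹ * B s1 s2 = Equiv.addRight (ρ s1 s2 (ρ s1 s2 (c s1 s2))) := by
  ext x
  simp only [Equiv.Perm.mul_apply, B_apply, A_inv_apply, Equiv.coe_addRight, map_add]
  rw [ρ_cube]

lemma addRight_pow (v : M s1 s2) (n : ℕ) :
    (Equiv.addRight v : Equiv.Perm (M s1 s2)) ^ n = Equiv.addRight (n • v) := by
  induction n with
  | zero => ext x; simp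
  | succ n ih =>
    ext x
    simp only [pow_succ, Equiv.Perm.mul_apply, ih, Equiv.coe_addRight, succ_nsmul]
    abel

lemma hrel4 : (A s1 s2 * (B s1 s2)⁻¹) ^ s1 * ((A s1 s2)⁻¹ * B s1 s2) ^ s2 = 1 := by
  rw [AB_inv, A_invB, addRight_pow, addRight_pow]
  ext x
  simp only [Equiv.Perm.mul_apply, Equiv.coe_addRight, Equiv.Perm.one_apply]
  rw [add_assoc, ← add_zero x]
  congr 1
  · abel
  have : (s2 • ρ s1 s2 (ρ s1 s2 (c s1 s2)) + s1 • (-c s1 s2) : M s1 s2)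
      = Submodule.Quotient.mk ((s2:ℤ) • rmap (rmap ((1:ℤ),(0:ℤ))) + (s1:ℤ) • (-((1:ℤ),(0:ℤ)))) := by
    simp only [← mk_eq_c, ρ_mk, Submodule.Quotient.mk_add, Submodule.Quotient.mk_smul,
      Submodule.Quotient.mk_neg, natCast_zsmul]
  rw [this, Submodule.Quotient.mk_eq_zero]
  have : ((s2:ℤ) • rmap (rmap ((1:ℤ),(0:ℤ))) + (s1:ℤ) • (-((1:ℤ),(0:ℤ)))) =
      (-1 : ℤ) • (((s1:ℤ) + s2, (s2:ℤ))) := by ext <;> simp <;> ring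
  rw [this]
  exact Submodule.smul_mem _ _ (lam_mem s1 s2)

lemma not_mem1 (hs : 2 < s1 + s2) : (((1:ℤ), (-1:ℤ))) ∉ L s1 s2 := by
  intro h
  rw [L, Submodule.mem_span_pair] at h
  obtain ⟨p, q, hpq⟩ := h
  rw [Prod.ext_iff] at hpq
  obtain ⟨h1, h2⟩ := hpq
  simp only [Prod.fst_add, Prod.snd_add, Prod.smul_fst, Prod.smul_snd, smul_eq_mul] at h1 h2
  -- h1 : p * (s1+s2) + q * (-s2) = 1 ; h2 : p * s2 + q * s1 = -1
  have key : p * ((s1:ℤ) * s1 + s1 * s2 + s2 * s2) = (s1 : ℤ) - s2 := by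
    linear_combination (s1 : ℤ) * h1 + (s2 : ℤ) * h2
  have key2 : q * ((s1:ℤ) * s1 + s1 * s2 + s2 * s2) = -((s1:ℤ) + 2 * s2) := by
    linear_combination (-(s2:ℤ)) * h1 + ((s1:ℤ) + s2) * h2
  have hs' : (3:ℤ) ≤ (s1:ℤ) + s2 := by push_cast; omega
  have hn : (s1 : ℤ) + s2 < (s1:ℤ) * s1 + s1 * s2 + s2 * s2 := by
    nlinarith [sq_nonneg ((s1:ℤ) - s2), mul_nonneg (by linarith : (0:ℤ) ≤ (s1:ℤ) + s2 - 3)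
      (by positivity : (0:ℤ) ≤ (s1:ℤ) + s2)]
  rcases eq_or_ne s1 s2 with he | he
  · subst he
    have hs1 : (2 : ℤ) ≤ s1 := by
      have : 2 < s1 + s1 := hs
      push_cast; omega
    have hz : p * ((s1:ℤ) * s1 + s1 * s1 + s1 * s1) = 0 := by rw [key]; ring
    have hp : p = 0 := by
      rcases mul_eq_zero.mp hz with h | h
      · exact h
      · nlinarith
    subst hp
    have h0 : (3 * (s1:ℤ)) * (q * s1 + 1) = 0 := by linear_combination key2
    rcases mul_eq_zero.mp h0 with h | h
    · nlinarith
    · have hq : q * (s1:ℤ) = -1 := by linarith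
      have hdvd : (s1 : ℤ) ∣ 1 := ⟨-q, by linear_combination hq⟩
      have := Int.le_of_dvd one_pos hdvd
      omega
  · have hd : (s1:ℤ) - s2 ≠ 0 := by
      intro h
      apply he
      have : (s1:ℤ) = s2 := by linarith
      exact_mod_cast this
    have hdvd : ((s1:ℤ) * s1 + s1 * s2 + s2 * s2) ∣ ((s1:ℤ) - s2) :=
      ⟨p, by linear_combination -key⟩
    have hle := Int.le_of_dvd (abs_pos.mpr hd) ((dvd_abs _ _).mpr hdvd)
    have habs : |(s1:ℤ) - s2| ≤ (s1:ℤ) + s2 := by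
      rw [abs_le]
      constructor <;> [nlinarith; nlinarith]
    linarith

lemma not_mem2 (hs : 2 < s1 + s2) : (((2:ℤ), (1:ℤ))) ∉ L s1 s2 := by
  intro h
  rw [L, Submodule.mem_span_pair] at h
  obtain ⟨p, q, hpq⟩ := h
  rw [Prod.ext_iff] at hpq
  obtain ⟨h1, h2⟩ := hpq
  simp only [Prod.fst_add, Prod.snd_add, Prod.smul_fst, Prod.smul_snd, smul_eq_mul] at h1 h2
  have key : p * ((s1:ℤ) * s1 + s1 * s2 + s2 * s2) = 2 * (s1 : ℤ) + s2 := by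
    linear_combination (s1 : ℤ) * h1 + (s2 : ℤ) * h2
  have hpos : (0 : ℤ) < 2 * s1 + s2 := by push_cast at hs ⊢; omega
  have hs' : (3:ℤ) ≤ (s1:ℤ) + s2 := by push_cast; omega
  have hn : 2 * (s1 : ℤ) + s2 < (s1:ℤ) * s1 + s1 * s2 + s2 * s2 := by
    nlinarith [sq_nonneg ((s1:ℤ) - s2), mul_nonneg (by linarith : (0:ℤ) ≤ (s1:ℤ) + s2 - 3)
      (by positivity : (0:ℤ) ≤ (s1:ℤ) + s2), (by positivity : (0:ℤ) ≤ (s1:ℤ)),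
      (by positivity : (0:ℤ) ≤ (s2:ℤ))]
  have hdvd : ((s1:ℤ) * s1 + s1 * s2 + s2 * s2) ∣ (2 * (s1:ℤ) + s2) :=
    ⟨p, by linear_combination -key⟩
  have := Int.le_of_dvd hpos hdvd
  linarith

lemma key1 (hs : 2 < s1 + s2) : c s1 s2 - ρ s1 s2 (c s1 s2) ≠ 0 := by
  have : c s1 s2 - ρ s1 s2 (c s1 s2) = Submodule.Quotient.mk (((1:ℤ), (-1:ℤ))) := by
    rw [← mk_eq_c, ρ_mk, ← Submodule.Quotient.mk_sub]
    congr 1 <;> ext <;> simp <;> ring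
  rw [this, Ne, Submodule.Quotient.mk_eq_zero]
  exact not_mem1 s1 s2 hs

lemma key2 (hs : 2 < s1 + s2) : c s1 s2 - ρ s1 s2 (ρ s1 s2 (c s1 s2)) ≠ 0 := by
  have : c s1 s2 - ρ s1 s2 (ρ s1 s2 (c s1 s2)) = Submodule.Quotient.mk (((2:ℤ), (1:ℤ))) := by
    rw [← mk_eq_c, ρ_mk, ρ_mk, ← Submodule.Quotient.mk_sub]
    congr 1 <;> ext <;> simp <;> ring
  rw [this, Ne, Submodule.Quotient.mk_eq_zero]
  exact not_mem2 s1 s2 hs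

lemma A_pow_fix (n : ℕ) : (A s1 s2 ^ n) 0 = 0 := by
  induction n with
  | zero => rfl
  | succ n ih => rw [pow_succ, Equiv.Perm.mul_apply, A_apply, map_zero, ih]

lemma A_zpow (t : ℤ) : A s1 s2 ^ t = A s1 s2 ^ (t % 3).toNat := by
  conv_lhs => rw [← Int.mul_ediv_add_emod t 3]
  rw [zpow_add, zpow_mul, show ((3:ℤ)) = ((3:ℕ):ℤ) from rfl, zpow_natCast, hA3, one_zpow,
    one_mul, ← zpow_natCast, Int.toNat_of_nonneg (Int.emod_nonneg t (by norm_num))]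

end Stmt15Aux

/-- Relations of the rotational group of the toroidal hypermap (3,3,3)_{(s1,s2)}. -/
def rels333 (s1 s2 : ℕ) : Set (FreeGroup (Fin 2)) :=
  { (FreeGroup.of 0) ^ 3, (FreeGroup.of 1) ^ 3,
    (FreeGroup.of 0 * FreeGroup.of 1) ^ 3,
    (FreeGroup.of 0 * (FreeGroup.of 1)⁻¹) ^ s1 *
      ((FreeGroup.of 0)⁻¹ * FreeGroup.of 1) ^ s2 }

open Stmt15Aux in
theorem stmt_15 (s1 s2 : ℕ) (hs : 2 < s1 + s2) :
    (Subgroup.zpowers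
        (PresentedGroup.of 0 : PresentedGroup (rels333 s1 s2))).normalCore = ⊥ := by
  have hrels : ∀ r ∈ rels333 s1 s2, FreeGroup.lift (![A s1 s2, B s1 s2]) r = 1 := by
    intro r hr
    simp only [rels333, Set.mem_insert_iff, Set.mem_singleton_iff] at hr
    rcases hr with rfl | rfl | rfl | rfl
    · rw [map_pow, FreeGroup.lift_apply_of]
      exact hA3 s1 s2
    · rw [map_pow, FreeGroup.lift_apply_of]
      exact hB3 s1 s2
    · rw [map_pow, map_mul, FreeGroup.lift_apply_of, FreeGroup.lift_apply_of]
      exact hAB3 s1 s2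
    · rw [map_mul, map_pow, map_pow, map_mul, map_mul, map_inv, map_inv,
        FreeGroup.lift_apply_of, FreeGroup.lift_apply_of]
      exact hrel4 s1 s2
  set φ : PresentedGroup (rels333 s1 s2) →* Equiv.Perm (M s1 s2) :=
    PresentedGroup.toGroup hrels with hφdef
  have hφ0 : φ (PresentedGroup.of 0) = A s1 s2 := PresentedGroup.toGroup.of hrels
  have hφ1 : φ (PresentedGroup.of 1) = B s1 s2 := PresentedGroup.toGroup.of hrels
  have ha3 : (PresentedGroup.of 0 : PresentedGroup (rels333 s1 s2)) ^ 3 = 1 := by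
    have hmem : ((FreeGroup.of 0 : FreeGroup (Fin 2)) ^ 3) ∈
        Subgroup.normalClosure (rels333 s1 s2) :=
      Subgroup.subset_normalClosure (by left; rfl)
    show PresentedGroup.mk (rels333 s1 s2) (FreeGroup.of 0) ^ 3 = 1
    rw [← map_pow]
    exact (QuotientGroup.eq_one_iff _).mpr hmem
  rw [eq_bot_iff]
  intro x hx
  obtain ⟨k, hk⟩ :=
    Subgroup.mem_zpowers_iff.mp (Subgroup.normalCore_le _ hx)
  have hconj : PresentedGroup.of 1 * x * (PresentedGroup.of 1)⁻¹ ∈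
      Subgroup.zpowers (PresentedGroup.of 0 : PresentedGroup (rels333 s1 s2)) :=
    Subgroup.normalCore_le _ ((Subgroup.normalCore_normal _).conj_mem x hx _)
  obtain ⟨m, hm⟩ := Subgroup.mem_zpowers_iff.mp hconj
  -- push through φ
  have hmφ : A s1 s2 ^ m = B s1 s2 * A s1 s2 ^ k * (B s1 s2)⁻¹ := by
    have := congrArg φ hm
    rw [map_zpow, map_mul, map_mul, map_inv, hφ0, hφ1, ← hk, map_zpow, hφ0] at this
    exact this
  have happ := DFunLike.congr_fun hmφ (0 : M s1 s2)
  rw [A_zpow s1 s2 m, A_pow_fix, A_zpow s1 s2 k] at happ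
  have h3k : k % 3 = 0 := by
    rcases (by omega : k % 3 = 0 ∨ k % 3 = 1 ∨ k % 3 = 2) with h3 | h3 | h3
    · exact h3
    · exfalso
      rw [h3] at happ
      simp only [Int.toNat_one, pow_one, Equiv.Perm.mul_apply, B_inv_apply, A_apply, B_apply,
        ρ_cube] at happ
      apply key1 s1 s2 hs
      rw [zero_sub, map_neg] at happ
      calc c s1 s2 - ρ s1 s2 (c s1 s2) = -(ρ s1 s2 (c s1 s2)) + c s1 s2 := by abel
        _ = 0 := happ.symm
    · exfalso
      rw [h3] at happ
      rw [show ((2:ℤ)).toNat = 2 from rfl, sq] at happ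
      simp only [Equiv.Perm.mul_apply, B_inv_apply, A_apply, B_apply, ρ_cube] at happ
      apply key2 s1 s2 hs
      rw [zero_sub, map_neg, map_neg] at happ
      calc c s1 s2 - ρ s1 s2 (ρ s1 s2 (c s1 s2))
            = -(ρ s1 s2 (ρ s1 s2 (c s1 s2))) + c s1 s2 := by abel
        _ = 0 := happ.symm
  rw [Subgroup.mem_bot, ← hk]
  obtain ⟨t, rfl⟩ : ∃ t, k = 3 * t := ⟨k / 3, by omega⟩
  rw [zpow_mul, show ((3:ℤ)) = ((3:ℕ):ℤ) from rfl, zpow_natCast, ha3, one_zpow]
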